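/- Positive definiteness of the posterior-linearization innovation covariance: Ŝ = H P̂ Hᵀ + R − H K R − (H K R)ᵀ is a symmetric positive definite matrix. -/

import Mathlib

open Matrix

lemma transpose_mul_mul_posDef {m : ℕ} {M B : Matrix (Fin m) (Fin m) ℝ}
    (hM : M.PosDef) (hB : IsUnit B) : (Bᵀ * M * B).PosDef := by
  have hdet : IsUnit B.det := (Matrix.isUnit_iff_isUnit_det B).mp hB
  refine Matrix.PosDef.of_dotProduct_mulVec_pos ?_ (fun x hx => ?_)
  · have := (hM.posSemidef.conjTranspose_mul_mul_same B).1
    simpa [conjTranspose_eq_transpose_of_trivial] using this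
  · have hBx : B *ᵥ x ≠ 0 := by
      intro h
      apply hx
      have := congrArg (fun v => B⁻¹ *ᵥ v) h
      simpa [mulVec_mulVec, nonsing_inv_mul _ hdet] using this
    have key : star x ⬝ᵥ (Bᵀ * M * B) *ᵥ x = star (B *ᵥ x) ⬝ᵥ M *ᵥ (B *ᵥ x) := by
      simp only [star_trivial, ← mulVec_mulVec, dotProduct_mulVec, vecMul_transpose]
    rw [key]
    exact hM.dotProduct_mulVec_pos hBx

/-- The posterior-linearization innovation covariance
`Ŝ = H P̂ Hᵀ + R − H K R − (H K R)ᵀ` is symmetric positive definite. -/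
theorem Shat_posDef
    (n m : ℕ) (hn : 0 < n) (hm : 0 < m)
    (H : Matrix (Fin m) (Fin n) ℝ)
    (R : Matrix (Fin m) (Fin m) ℝ) (hR : R.PosDef)
    (Pbar : Matrix (Fin n) (Fin n) ℝ) (hPbar : Pbar.PosDef)
    (S : Matrix (Fin m) (Fin m) ℝ) (hS : S = H * Pbar * Hᵀ + R)
    (K : Matrix (Fin n) (Fin m) ℝ) (hK : K = Pbar * Hᵀ * S⁻¹)
    (Phat : Matrix (Fin n) (Fin n) ℝ) (hPhat : Phat = Pbar - K * H * Pbar)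
    (Shat : Matrix (Fin m) (Fin m) ℝ)
    (hShat : Shat = H * Phat * Hᵀ + R - H * K * R - (H * K * R)ᵀ) :
    Shat.PosDef := by
  -- S is positive definite
  have hSpd : S.PosDef := by
    rw [hS]
    have hsemi : (H * Pbar * Hᵀ).PosSemidef := by
      have := hPbar.posSemidef.mul_mul_conjTranspose_same H
      simpa [conjTranspose_eq_transpose_of_trivial] using this
    exact Matrix.PosDef.posSemidef_add hsemi hR
  have hSinv : S⁻¹.PosDef := hSpd.inv
  have hdet : IsUnit S.det := (Matrix.isUnit_iff_isUnit_det S).mp hSpd.isUnit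
  have hSS : S * S⁻¹ = 1 := mul_nonsing_inv _ hdet
  have hSS' : S⁻¹ * S = 1 := nonsing_inv_mul _ hdet
  have hSinvSym : S⁻¹ᵀ = S⁻¹ := by
    simpa [conjTranspose_eq_transpose_of_trivial] using hSinv.isHermitian.eq
  have hRsym : Rᵀ = R := by
    simpa [conjTranspose_eq_transpose_of_trivial] using hR.isHermitian.eq
  have hA : H * Pbar * Hᵀ = S - R := by rw [hS]; abel
  have hHK : H * K = (S - R) * S⁻¹ := by
    rw [hK, ← Matrix.mul_assoc, ← Matrix.mul_assoc, hA]
  have hHKR : H * K * R = R - R * S⁻¹ * R := by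
    have h1 : (S - R) * S⁻¹ * R = S * S⁻¹ * R - R * S⁻¹ * R := by noncomm_ring
    rw [hHK, h1, hSS, Matrix.one_mul]
  have hHPhatH : H * Phat * Hᵀ = R - R * S⁻¹ * R := by
    rw [hPhat]
    have h2 : H * (Pbar - K * H * Pbar) * Hᵀ
        = H * Pbar * Hᵀ - (H * K) * (H * Pbar * Hᵀ) := by
      simp only [Matrix.mul_sub, Matrix.sub_mul, Matrix.mul_assoc]
    have expand : (S - R) * S⁻¹ * (S - R)
        = S * S⁻¹ * S - S * S⁻¹ * R - R * (S⁻¹ * S) + R * S⁻¹ * R := by noncomm_ring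
    rw [h2, hA, hHK, expand, hSS, hSS']
    simp only [Matrix.one_mul, Matrix.mul_one]
    abel
  have hRSRsym : (R * S⁻¹ * R)ᵀ = R * S⁻¹ * R := by
    rw [Matrix.transpose_mul, Matrix.transpose_mul, hRsym, hSinvSym, Matrix.mul_assoc]
  have hShat' : Shat = R * S⁻¹ * R := by
    rw [hShat, hHPhatH, hHKR, Matrix.transpose_sub, hRsym, hRSRsym]
    abel
  rw [hShat']
  have := transpose_mul_mul_posDef hSinv hR.isUnit
  rwa [hRsym] at this
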